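/- Fix χ > 0 and real σ, θ, and let (ν, μ) be the image of (θ, σ) under the odd Ptolemy transformation with cross-ratio χ. Then applying the odd Ptolemy transformation with cross-ratio χ⁻¹ to the pair (ν, μ) (with ν in the θ-slot and μ in the σ-slot) returns (σ, −θ): (μ + ν·√(χ⁻¹))/√(1+χ⁻¹) = σ and (μ·√(χ⁻¹) − ν)/√(1+χ⁻¹) = −θ. Hence applying the odd Ptolemy transformation twice effects the switch transformation together with the sign reversal θ ↦ −θ. -/

import Mathlib

/-- Applying the odd Ptolemy transformation twice (second time with cross-ratio
`χ⁻¹`) returns `(σ, −θ)`: the switch transformation with sign reversal. -/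
theorem stmt_5 (χ : ℝ) (hχ : 0 < χ) (σ θ ν μ : ℝ)
    (hν : ν = (σ + θ * Real.sqrt χ) / Real.sqrt (1 + χ))
    (hμ : μ = (σ * Real.sqrt χ - θ) / Real.sqrt (1 + χ)) :
    (μ + ν * Real.sqrt χ⁻¹) / Real.sqrt (1 + χ⁻¹) = σ ∧
    (μ * Real.sqrt χ⁻¹ - ν) / Real.sqrt (1 + χ⁻¹) = -θ := by
  have hs : 0 < Real.sqrt χ := Real.sqrt_pos.mpr hχ
  have ht : 0 < Real.sqrt (1 + χ) := Real.sqrt_pos.mpr (by linarith)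
  have hs2 : Real.sqrt χ ^ 2 = χ := Real.sq_sqrt hχ.le
  have ht2 : Real.sqrt (1 + χ) ^ 2 = 1 + χ := Real.sq_sqrt (by linarith)
  have hinv : Real.sqrt χ⁻¹ = (Real.sqrt χ)⁻¹ := Real.sqrt_inv χ
  have he : (1 + χ⁻¹) = (1 + χ) / χ := by field_simp; ring
  have hinv2 : Real.sqrt (1 + χ⁻¹) = Real.sqrt (1 + χ) / Real.sqrt χ := by
    rw [he, Real.sqrt_div (by linarith)]
  subst hν hμ
  rw [hinv, hinv2]
  constructor <;> field_simp <;>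
    [linear_combination σ * (hs2 - ht2);
     linear_combination θ * (ht2 - hs2)]
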